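/- Let X be a Hilbert space, E ∈ L(X) be self-adjoint and non-negative, and A: D(A) ⊆ X → X be dissipative. Then for every λ ∈ ℂ with Re λ > 0 such that λE − A is boundedly invertible, and for every x ∈ X, one has Re ⟨(λE−A)⁻¹x, x⟩ ≥ 0. -/

import Mathlib

open scoped InnerProductSpace

/-- `R` is the bounded (two-sided) inverse of `λ E - A`. -/
def IsDAEResolvent {X : Type*} [NormedAddCommGroup X] [InnerProductSpace ℂ X]
    (E : X →L[ℂ] X) (A : X →ₗ.[ℂ] X) (lam : ℂ) (R : X →L[ℂ] X) : Prop :=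
  (∀ z : X, ∃ h : R z ∈ A.domain, lam • E (R z) - A ⟨R z, h⟩ = z) ∧
  (∀ x : A.domain, R (lam • E (x : X) - A x) = (x : X))

/-- if `E` is self-adjoint and non-negative and `A` is dissipative, then
for `Re λ > 0` with `λE − A` boundedly invertible, `Re ⟨(λE−A)⁻¹ x, x⟩ ≥ 0` for all `x`. -/
theorem stmt_2 {X : Type*} [NormedAddCommGroup X] [InnerProductSpace ℂ X] [CompleteSpace X]
    (E : X →L[ℂ] X) (hEsa : IsSelfAdjoint E)
    (hEnn : ∀ x : X, 0 ≤ (⟪x, E x⟫_ℂ).re)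
    (A : X →ₗ.[ℂ] X) (hAclosed : A.IsClosed) (hAdense : Dense (A.domain : Set X))
    (hAdis : ∀ x : A.domain, (⟪(x : X), A x⟫_ℂ).re ≤ 0)
    (lam : ℂ) (hlam : 0 < lam.re)
    (R : X →L[ℂ] X) (hR : IsDAEResolvent E A lam R) :
    ∀ x : X, 0 ≤ (⟪x, R x⟫_ℂ).re := by
  intro x
  obtain ⟨h, heq⟩ := hR.1 x
  set y := R x with hy
  have him : (⟪y, E y⟫_ℂ).im = 0 := by
    have h1 : ⟪E y, y⟫_ℂ = ⟪y, E y⟫_ℂ := hEsa.isSymmetric y y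
    have h2 : ⟪E y, y⟫_ℂ = starRingEnd ℂ ⟪y, E y⟫_ℂ := (inner_conj_symm _ _).symm
    have : starRingEnd ℂ ⟪y, E y⟫_ℂ = ⟪y, E y⟫_ℂ := by rw [← h2, h1]
    have := congrArg Complex.im this
    simpa using by linarith [this, Complex.conj_im (⟪y, E y⟫_ℂ)]
  have key : ⟪y, x⟫_ℂ = lam * ⟪y, E y⟫_ℂ - ⟪(y : X), A ⟨y, h⟩⟫_ℂ := by
    rw [← heq]
    simp [inner_sub_right, inner_smul_right]
    rfl
  have hre : 0 ≤ (⟪y, x⟫_ℂ).re := by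
    rw [key]
    have h3 := hEnn y
    have h4 := hAdis ⟨y, h⟩
    simp only [Complex.sub_re, Complex.mul_re, him]
    nlinarith [h3, h4, hlam.le]
  have : ⟪x, y⟫_ℂ = starRingEnd ℂ ⟪y, x⟫_ℂ := (inner_conj_symm _ _).symm
  rw [this, Complex.conj_re]
  exact hre
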